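/- arXiv:2604.07632 — 2 statements merged into one kernel-verified Lean document; each statement's English description precedes it below -/
import Mathlib

section
/- If f: ℝ → ℝ is continuous piecewise linear with at most m linear pieces and g: ℝ → ℝ is continuous piecewise linear with at most k linear pieces, then the composition g ∘ f is continuous piecewise linear with at most m·k linear pieces. -/
/-- `f` agrees with an affine function on the set `S`. -/
def AffineOnSet (f : ℝ → ℝ) (S : Set ℝ) : Prop :=
  ∃ a b : ℝ, ∀ x ∈ S, f x = a * x + b

/-- `f` is continuous piecewise linear with breakpoints contained in the finite set `s`. -/
def CPWL (f : ℝ → ℝ) (s : Finset ℝ) : Prop :=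
  Continuous f ∧ ∀ u v : ℝ, (∀ t ∈ Set.Ioo u v, t ∉ s) → AffineOnSet f (Set.Ioo u v)

/-- `f` is continuous piecewise linear with at most `m` linear pieces
(i.e. at most `m - 1` breakpoints). -/
def PiecesLe (f : ℝ → ℝ) (m : ℕ) : Prop :=
  ∃ s : Finset ℝ, s.card + 1 ≤ m ∧ CPWL f s

lemma affine_Icc {f : ℝ → ℝ} (hf : Continuous f) {u v a b : ℝ} (huv : u < v)
    (h : ∀ x ∈ Set.Ioo u v, f x = a * x + b) :
    ∀ x ∈ Set.Icc u v, f x = a * x + b := by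
  have heq : Set.EqOn f (fun x => a * x + b) (Set.Ioo u v) := h
  have h2 := heq.closure hf (by continuity)
  rwa [closure_Ioo huv.ne] at h2

/-- If `f` is continuous piecewise linear with at most `m` pieces and `g` with at most `k`
pieces, then `g ∘ f` is continuous piecewise linear with at most `m * k` pieces. -/
theorem comp_piecesLe (f g : ℝ → ℝ) (m k : ℕ)
    (hf : PiecesLe f m) (hg : PiecesLe g k) :
    PiecesLe (g ∘ f) (m * k) := by
  classical
  obtain ⟨s, hsm, hfc, hfa⟩ := hf
  obtain ⟨t, htk, hgc, hga⟩ := hg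
  set L : ℝ → WithBot ℝ := fun x => (s.filter (· < x)).max with hL
  set N : Set ℝ :=
    { x | x ∉ s ∧ f x ∈ t ∧ ∀ y, x < y → ¬ (∀ z ∈ Set.Icc x y, f z = f x) } with hN
  have key : ∀ x₁ x₂ : ℝ, x₁ ∈ N → x₂ ∈ N → x₁ < x₂ → L x₁ = L x₂ → f x₁ = f x₂ → False := by
    intro x₁ x₂ h1 h2 hlt hLeq hfeq
    have hgap : ∀ p ∈ s, p ∉ Set.Icc x₁ x₂ := by
      intro p hp hpI
      have hne1 : p ≠ x₁ := fun h => h1.1 (h ▸ hp)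
      have hne2 : p ≠ x₂ := fun h => h2.1 (h ▸ hp)
      have hp1 : x₁ < p := lt_of_le_of_ne hpI.1 (Ne.symm hne1)
      have hp2 : p < x₂ := lt_of_le_of_ne hpI.2 hne2
      have hmem : p ∈ s.filter (· < x₂) := Finset.mem_filter.2 ⟨hp, hp2⟩
      have hle : (p : WithBot ℝ) ≤ L x₂ := Finset.le_max hmem
      have hlt' : L x₁ < (p : WithBot ℝ) := by
        rcases hm : (s.filter (· < x₁)).max with _ | q
        · simp only [hL, hm]
          exact WithBot.bot_lt_coe p
        · have hq := Finset.mem_of_max hm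
          have hqx : q < x₁ := by
            have := Finset.mem_filter.1 hq
            simpa using this.2
          simp only [hL, hm]
          exact WithBot.coe_lt_coe.2 (hqx.trans hp1)
      rw [hLeq] at hlt'
      exact absurd hle (not_le.2 hlt')
    obtain ⟨a, b, hab⟩ := hfa x₁ x₂
      (fun z hz hzs => hgap z hzs ⟨le_of_lt hz.1, le_of_lt hz.2⟩)
    have habI := affine_Icc hfc hlt hab
    have e1 : f x₁ = a * x₁ + b := habI x₁ ⟨le_refl _, le_of_lt hlt⟩
    have e2 : f x₂ = a * x₂ + b := habI x₂ ⟨le_of_lt hlt, le_refl _⟩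
    have h4 : a * (x₂ - x₁) = 0 := by
      rw [e1, e2] at hfeq
      linear_combination - hfeq
    have ha : a = 0 := (mul_eq_zero.1 h4).resolve_right (sub_ne_zero.2 hlt.ne')
    have hconst : ∀ z ∈ Set.Icc x₁ x₂, f z = f x₁ := by
      intro z hz
      rw [habI z hz, e1, ha]
      ring
    exact h1.2.2 x₂ hlt hconst
  have inj : Set.InjOn (fun x => (L x, f x)) N := by
    intro x₁ h1 x₂ h2 heq
    simp only [Prod.mk.injEq] at heq
    by_contra hne
    rcases lt_or_gt_of_ne hne with h | h
    · exact key x₁ x₂ h1 h2 h heq.1 heq.2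
    · exact key x₂ x₁ h2 h1 h heq.1.symm heq.2.symm
  set F : Finset (WithBot ℝ × ℝ) :=
    (insert ⊥ (s.image ((↑) : ℝ → WithBot ℝ))) ×ˢ t with hF
  have maps : ∀ x ∈ N, (L x, f x) ∈ F := by
    intro x hx
    refine Finset.mem_product.2 ⟨?_, hx.2.1⟩
    rcases hm : (s.filter (· < x)).max with _ | q
    · simp only [hL, hm]
      exact Finset.mem_insert_self _ _
    · have hq := Finset.mem_of_max hm
      simp only [hL, hm]
      exact Finset.mem_insert.2
        (Or.inr (Finset.mem_image.2 ⟨q, (Finset.mem_filter.1 hq).1, rfl⟩))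
  have hNfin : N.Finite := Set.Finite.of_finite_image
    (Set.Finite.subset F.finite_toSet (by rintro _ ⟨x, hx, rfl⟩; exact maps x hx)) inj
  set Nf := hNfin.toFinset with hNf
  have hNcard : Nf.card ≤ (s.card + 1) * t.card := by
    have h1 : Nf.card ≤ F.card := by
      apply Finset.card_le_card_of_injOn (fun x => (L x, f x))
      · intro x hx
        exact maps x (hNfin.mem_toFinset.1 hx)
      · intro x hx y hy
        exact inj (hNfin.mem_toFinset.1 hx) (hNfin.mem_toFinset.1 hy)
    refine h1.trans ?_
    rw [hF, Finset.card_product]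
    have h2 : (insert ⊥ (s.image ((↑) : ℝ → WithBot ℝ))).card ≤ s.card + 1 :=
      (Finset.card_insert_le _ _).trans (Nat.add_le_add_right Finset.card_image_le 1)
    exact Nat.mul_le_mul_right _ h2
  refine ⟨s ∪ Nf, ?_, hgc.comp hfc, ?_⟩
  · have h1 : (s ∪ Nf).card ≤ s.card + Nf.card := Finset.card_union_le s Nf
    have h2 : s.card + Nf.card + 1 ≤ (s.card + 1) * (t.card + 1) := by
      nlinarith [hNcard]
    calc (s ∪ Nf).card + 1 ≤ s.card + Nf.card + 1 := by omega
      _ ≤ (s.card + 1) * (t.card + 1) := h2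
      _ ≤ m * k := Nat.mul_le_mul hsm htk
  · intro u v hB
    by_cases huv : u < v
    · obtain ⟨a, b, hab⟩ := hfa u v
        (fun z hz hzs => hB z hz (Finset.mem_union_left _ hzs))
      by_cases ha : a = 0
      · refine ⟨0, g b, fun x hx => ?_⟩
        simp only [Function.comp_apply]
        rw [hab x hx, ha]
        norm_num
      · set I1 := min (a*u+b) (a*v+b) with hI1
        set I2 := max (a*u+b) (a*v+b) with hI2
        have himg : ∀ x ∈ Set.Ioo u v, a*x+b ∈ Set.Ioo I1 I2 := by
          intro x hx
          rcases lt_or_gt_of_ne ha with hneg | hpos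
          · refine ⟨lt_of_le_of_lt (min_le_right _ _) (by nlinarith [hx.2]), ?_⟩
            exact lt_of_lt_of_le (by nlinarith [hx.1]) (le_max_left _ _)
          · refine ⟨lt_of_le_of_lt (min_le_left _ _) (by nlinarith [hx.1]), ?_⟩
            exact lt_of_lt_of_le (by nlinarith [hx.2]) (le_max_right _ _)
        have hpre : ∀ y ∈ Set.Ioo I1 I2, ∃ x ∈ Set.Ioo u v, a*x+b = y := by
          intro y hy
          refine ⟨(y-b)/a, ?_, by field_simp; ring⟩
          rcases lt_or_gt_of_ne ha with hneg | hpos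
          · have hi1 : I1 = a*v+b := min_eq_right (by nlinarith)
            have hi2 : I2 = a*u+b := max_eq_left (by nlinarith)
            rw [hi1] at hy
            rw [hi2] at hy
            constructor
            · rw [lt_div_iff_of_neg hneg]
              nlinarith [hy.2]
            · rw [div_lt_iff_of_neg hneg]
              nlinarith [hy.1]
          · have hi1 : I1 = a*u+b := min_eq_left (by nlinarith)
            have hi2 : I2 = a*v+b := max_eq_right (by nlinarith)
            rw [hi1] at hy
            rw [hi2] at hy
            constructor
            · rw [lt_div_iff₀ hpos]
              nlinarith [hy.1]
            · rw [div_lt_iff₀ hpos]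
              nlinarith [hy.2]
        have hnt : ∀ y ∈ Set.Ioo I1 I2, y ∉ t := by
          intro y hy hyt
          obtain ⟨x, hx, hxy⟩ := hpre y hy
          have hfx : f x = y := by rw [hab x hx, hxy]
          have hxB := hB x hx
          have hxs : x ∉ s := fun h => hxB (Finset.mem_union_left _ h)
          have hxN : x ∉ N := fun h =>
            hxB (Finset.mem_union_right _ (hNfin.mem_toFinset.2 h))
          rcases Classical.em (∃ y', x < y' ∧ ∀ z ∈ Set.Icc x y', f z = f x) with hc | hc
          · obtain ⟨y', hy', hconst⟩ := hc
            have hz1 : x < min y' v := lt_min hy' hx.2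
            set z := (x + min y' v)/2 with hz
            have hz2 : x < z := by rw [hz]; linarith
            have hz3 : z < min y' v := by rw [hz]; linarith
            have hzIoo : z ∈ Set.Ioo u v :=
              ⟨lt_trans hx.1 hz2, lt_of_lt_of_le hz3 (min_le_right _ _)⟩
            have hzIcc : z ∈ Set.Icc x y' :=
              ⟨le_of_lt hz2, le_of_lt (lt_of_lt_of_le hz3 (min_le_left _ _))⟩
            have e1 := hconst z hzIcc
            have e2 := hab z hzIoo
            have e3 := hab x hx
            have h4 : a * (z - x) = 0 := by
              rw [e2, e3] at e1
              linear_combination e1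
            exact ha ((mul_eq_zero.1 h4).resolve_right (sub_ne_zero.2 hz2.ne'))
          · rw [not_exists] at hc
            refine hxN ⟨hxs, by rw [hfx]; exact hyt, fun y' hy' hcz => ?_⟩
            exact hc y' ⟨hy', hcz⟩
        obtain ⟨c, d, hcd⟩ := hga I1 I2 hnt
        refine ⟨c * a, c * b + d, fun x hx => ?_⟩
        simp only [Function.comp_apply]
        rw [hab x hx, hcd (a*x+b) (himg x hx)]
        ring
    · refine ⟨0, 0, fun x hx => absurd hx ?_⟩
      rw [Set.Ioo_eq_empty huv]
      exact Set.notMem_empty x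
end

section
/- For every w ≥ 1 there exist continuous piecewise-linear functions g, h: ℝ → ℝ, each realizable by a one-hidden-layer ReLU network of width at most O(w), such that the composition h ∘ g has at least w² distinct breakpoints on [0,1]. -/
open Finset

/-- `x` is a breakpoint of `f`: `f` is not affine on any neighborhood of `x`. -/
def IsBreakpoint (f : ℝ → ℝ) (x : ℝ) : Prop :=
  ∀ ε : ℝ, 0 < ε → ¬ AffineOnSet f (Set.Ioo (x - ε) (x + ε))

/-- One-hidden-layer ReLU network of width `w` on `ℝ`. -/
def ReLUNet (w : ℕ) (a b c : ℕ → ℝ) (d : ℝ) (x : ℝ) : ℝ :=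
  (∑ j ∈ Finset.range w, a j * max (b j * x + c j) 0) + d

/-- `f` is exactly realizable by a one-hidden-layer ReLU network of width `w`. -/
def RealizableReLU (w : ℕ) (f : ℝ → ℝ) : Prop :=
  ∃ a b c : ℕ → ℝ, ∃ d : ℝ, ∀ x, f x = ReLUNet w a b c d x

/-! ### Auxiliary development: triangle waves -/

/-- The unit triangle wave: `2 · dist(v, ℤ)` (using the nearest integer). -/
noncomputable def Tw (v : ℝ) : ℝ := 2 * |v - round v|

lemma Tw_eq (m : ℤ) (v : ℝ) (h : |v - m| ≤ 1/2) : Tw v = 2 * |v - m| := by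
  have h2 : |v - (round v : ℝ)| ≤ 1/2 := abs_sub_round v
  have hd : |((round v : ℝ)) - m| ≤ 1 := by
    calc |((round v : ℝ)) - m| = |(v - m) - (v - round v)| := by ring_nf
    _ ≤ |v - m| + |v - (round v:ℝ)| := by exact abs_sub _ _
    _ ≤ 1 := by linarith
  have hdz : round v = m - 1 ∨ round v = m ∨ round v = m + 1 := by
    have h1 := (abs_le.mp hd).1
    have h2' := (abs_le.mp hd).2
    have h3 : (-1:ℝ) ≤ ((round v - m : ℤ) : ℝ) := by push_cast; linarith
    have h4 : ((round v - m : ℤ) : ℝ) ≤ 1 := by push_cast; linarith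
    have l1 : (-1:ℤ) ≤ round v - m := by exact_mod_cast h3
    have l2 : round v - m ≤ 1 := by exact_mod_cast h4
    omega
  have ha := abs_le.mp h
  have hb := abs_le.mp h2
  rcases hdz with hr | hr | hr
  · rw [Tw]
    rw [hr] at hb ⊢
    push_cast at hb ⊢
    have hv : v - m = -(1/2) := by linarith [ha.1, hb.2]
    rw [show v - (m-1:ℝ) = (v - m) + 1 by ring, hv]
    norm_num
  · rw [Tw, hr]
  · rw [Tw]
    rw [hr] at hb ⊢
    push_cast at hb ⊢
    have hv : v - m = 1/2 := by linarith [ha.2, hb.1]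
    rw [show v - (m+1:ℝ) = (v - m) - 1 by ring, hv]
    norm_num

lemma Tw_neg (v : ℝ) : Tw (-v) = Tw v := by
  have h : |(-v) - (-(round v) : ℤ)| ≤ 1/2 := by
    push_cast
    rw [show -v - -(round v:ℝ) = -(v - round v) by ring, abs_neg]
    exact abs_sub_round v
  rw [Tw_eq _ _ h, Tw]
  push_cast
  rw [show -v - -(round v:ℝ) = -(v - round v) by ring, abs_neg]

lemma Tw_add_int (v : ℝ) (n : ℤ) : Tw (v + n) = Tw v := by
  have h : |(v + n) - ((round v + n : ℤ))| ≤ 1/2 := by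
    push_cast
    rw [show v + n - ((round v:ℝ) + n) = v - round v by ring]
    exact abs_sub_round v
  rw [Tw_eq _ _ h, Tw]
  push_cast
  rw [show v + n - ((round v:ℝ) + n) = v - round v by ring]

lemma Tw_nonneg (v : ℝ) : 0 ≤ Tw v := by rw [Tw]; positivity

lemma Tw_le_one (v : ℝ) : Tw v ≤ 1 := by
  have := abs_sub_round v
  rw [Tw]; linarith

/-- Key composition identity for triangle waves. -/
lemma Tw_comp (w : ℕ) (u : ℝ) : Tw (w * Tw u) = Tw (2 * w * u) := by
  set r := round u with hr
  have hTu : Tw u = 2 * |u - r| := rfl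
  have h1 : (w : ℝ) * Tw u = |2 * w * (u - r)| := by
    rw [hTu, abs_mul]
    rw [abs_of_nonneg (by positivity : (0:ℝ) ≤ 2 * (w:ℕ))]
    ring
  rw [h1]
  rcases abs_choice (2 * (w:ℝ) * (u - r)) with h | h <;> rw [h]
  · rw [show 2 * (w:ℝ) * (u - r) = 2 * w * u + (-(2 * w * r) : ℤ) by push_cast; ring]
    exact Tw_add_int _ _
  · rw [Tw_neg]
    rw [show 2 * (w:ℝ) * (u - r) = 2 * w * u + (-(2 * w * r) : ℤ) by push_cast; ring]
    exact Tw_add_int _ _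

/-- the hat (tent) function. -/
noncomputable def hatF (t : ℝ) : ℝ := max (1 - |t|) 0

lemma hat_id (t : ℝ) : max (t+1) 0 - 2 * max t 0 + max (t-1) 0 = hatF t := by
  rw [hatF]
  rcases le_total t 0 with h | h <;> rcases le_total t (-1) with h1 | h1 <;>
    rcases le_total t 1 with h2 | h2 <;>
    simp [abs_of_nonneg, abs_of_nonpos, h, max_def] <;> split_ifs <;> linarith

/-- The `w`-tooth sawtooth on `[0,1]`, vanishing outside. -/
noncomputable def gFun (w : ℕ) (x : ℝ) : ℝ :=
  ∑ k ∈ Finset.range w, hatF (2*(w*x) - (2*k+1))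

lemma sum_range_three (n : ℕ) (F : ℕ → ℝ) :
    ∑ j ∈ range (3*n), F j = ∑ k ∈ range n, (F (3*k) + F (3*k+1) + F (3*k+2)) := by
  induction n with
  | zero => simp
  | succ n ih =>
    rw [show 3*(n+1) = (3*n + 1 + 1) + 1 by ring, sum_range_succ, sum_range_succ,
      sum_range_succ, ih, sum_range_succ]
    ring

lemma gFun_realizable (w : ℕ) : RealizableReLU (3*w) (gFun w) := by
  refine ⟨fun j => if j % 3 = 0 then 1 else if j % 3 = 1 then -2 else 1,
    fun _ => 2*w, fun j => (1 - (j % 3 : ℕ)) - (2*(j/3 : ℕ) + 1), 0, fun x => ?_⟩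
  rw [ReLUNet, add_zero, sum_range_three, gFun]
  refine Finset.sum_congr rfl fun k _ => ?_
  have e0 : (3*k) % 3 = 0 := by omega
  have e1 : (3*k+1) % 3 = 1 := by omega
  have e2 : (3*k+2) % 3 = 2 := by omega
  have d0 : (3*k) / 3 = k := by omega
  have d1 : (3*k+1) / 3 = k := by omega
  have d2 : (3*k+2) / 3 = k := by omega
  rw [e0, e1, e2, d0, d1, d2]
  norm_num
  rw [← hat_id (2*(w*x) - (2*k+1))]
  ring_nf

lemma hatF_zero {t : ℝ} (h : 1 ≤ |t|) : hatF t = 0 := by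
  rw [hatF, max_eq_right]; linarith

lemma gFun_eq (w : ℕ) (hw : 1 ≤ w) (x : ℝ) (h0 : 0 ≤ x) (h1 : x ≤ 1) :
    gFun w x = Tw (w * x) := by
  set u : ℝ := w * x with hu
  have hu0 : 0 ≤ u := by positivity
  have huw : u ≤ w := by
    have hw' : (1:ℝ) ≤ w := by exact_mod_cast hw
    rw [hu]; nlinarith
  obtain ⟨k, hkw, hk1, hk2⟩ : ∃ k : ℕ, k < w ∧ (k:ℝ) ≤ u ∧ u ≤ (k:ℝ) + 1 := by
    rcases lt_or_ge u w with hlt | hge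
    · refine ⟨⌊u⌋.toNat, ?_, ?_, ?_⟩
      · have h1 : (⌊u⌋ : ℝ) ≤ u := Int.floor_le u
        have h2 : 0 ≤ ⌊u⌋ := Int.floor_nonneg.mpr hu0
        have : (⌊u⌋:ℝ) < w := lt_of_le_of_lt h1 hlt
        have : ⌊u⌋ < (w:ℤ) := by exact_mod_cast this
        omega
      · have h1 : (⌊u⌋ : ℝ) ≤ u := Int.floor_le u
        have h2 : 0 ≤ ⌊u⌋ := Int.floor_nonneg.mpr hu0
        rw [show ((⌊u⌋.toNat : ℕ) : ℝ) = (⌊u⌋ : ℝ) by exact_mod_cast Int.toNat_of_nonneg h2]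
        exact h1
      · have h1 : u < ⌊u⌋ + 1 := Int.lt_floor_add_one u
        have h2 : 0 ≤ ⌊u⌋ := Int.floor_nonneg.mpr hu0
        rw [show ((⌊u⌋.toNat : ℕ) : ℝ) = (⌊u⌋ : ℝ) by exact_mod_cast Int.toNat_of_nonneg h2]
        linarith
    · have hew : u = w := le_antisymm huw hge
      refine ⟨w - 1, by omega, ?_, ?_⟩ <;>
        rw [hew, show ((w - 1 : ℕ) : ℝ) = (w:ℝ) - 1 by push_cast [hw]; ring] <;> linarith
  have hsum : gFun w x = hatF (2*u - (2*k+1)) := by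
    rw [gFun, ← hu]
    refine Finset.sum_eq_single_of_mem k (mem_range.mpr hkw) fun j _ hj => ?_
    apply hatF_zero
    rcases lt_or_gt_of_ne hj with hlt | hgt
    · have hjk : (j:ℝ) + 1 ≤ k := by exact_mod_cast Nat.succ_le_of_lt hlt
      rw [abs_of_nonneg (by linarith)]
      linarith
    · have : (k:ℝ) + 1 ≤ j := by exact_mod_cast Nat.succ_le_of_lt hgt
      rw [abs_of_nonpos (by linarith)]
      linarith
  rw [hsum]
  set s : ℝ := u - k with hs
  have hs0 : 0 ≤ s := by linarith
  have hs1 : s ≤ 1 := by linarith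
  have harg : 2*u - (2*(k:ℝ)+1) = 2*s - 1 := by rw [hs]; ring
  rw [harg]
  rcases le_total s (1/2) with hh | hh
  · have habs : |u - ((k:ℤ):ℝ)| ≤ 1/2 := by
      have : u - ((k:ℤ):ℝ) = s := by push_cast; rw [hs]
      rw [this, abs_of_nonneg hs0]; linarith
    rw [Tw_eq (k:ℤ) u habs, hatF, abs_of_nonpos (by linarith : 2*s-1 ≤ 0),
      max_eq_left (by linarith)]
    have : u - ((k:ℤ):ℝ) = s := by push_cast; rw [hs]
    rw [this, abs_of_nonneg hs0]
    ring
  · have heq : u - (((k:ℤ)+1:ℤ):ℝ) = s - 1 := by push_cast; rw [hs]; ring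
    have habs : |u - (((k:ℤ)+1:ℤ):ℝ)| ≤ 1/2 := by
      rw [heq, abs_of_nonpos (by linarith)]; linarith
    rw [Tw_eq ((k:ℤ)+1) u habs, hatF, abs_of_nonneg (by linarith : 0 ≤ 2*s-1),
      max_eq_left (by linarith), heq, abs_of_nonpos (by linarith)]
    ring

lemma gFun_nonneg (w : ℕ) (x : ℝ) : 0 ≤ gFun w x :=
  Finset.sum_nonneg fun k _ => le_max_right _ _

lemma gFun_zero_outside (w : ℕ) (x : ℝ) (h : x ≤ 0 ∨ 1 ≤ x) : gFun w x = 0 := by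
  rw [gFun]
  refine Finset.sum_eq_zero fun k hk => hatF_zero ?_
  have hk' : (k:ℝ) + 1 ≤ w := by exact_mod_cast Nat.succ_le_of_lt (mem_range.mp hk)
  have hk0 : (0:ℝ) ≤ k := Nat.cast_nonneg k
  rcases h with h | h
  · rw [abs_of_nonpos (by nlinarith)]; nlinarith
  · rw [abs_of_nonneg (by nlinarith)]; nlinarith

lemma gFun_le_one (w : ℕ) (hw : 1 ≤ w) (x : ℝ) : gFun w x ≤ 1 := by
  rcases le_or_gt x 0 with h | h
  · rw [gFun_zero_outside w x (Or.inl h)]; norm_num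
  rcases le_or_gt 1 x with h' | h'
  · rw [gFun_zero_outside w x (Or.inr h')]; norm_num
  · rw [gFun_eq w hw x h.le h'.le]; exact Tw_le_one _

/-- The composition is the `2w²`-tooth triangle wave on `[0,1]`. -/
lemma comp_eq (w : ℕ) (hw : 1 ≤ w) (x : ℝ) (h0 : 0 ≤ x) (h1 : x ≤ 1) :
    gFun w (gFun w x) = Tw (2 * (w:ℝ)^2 * x) := by
  have hg1 : gFun w x = Tw (w * x) := gFun_eq w hw x h0 h1
  have hb0 : 0 ≤ gFun w x := gFun_nonneg w x
  have hb1 : gFun w x ≤ 1 := gFun_le_one w hw x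
  rw [gFun_eq w hw _ hb0 hb1, hg1, Tw_comp,
    show 2 * (w:ℝ) * ((w:ℝ) * x) = 2 * (w:ℝ)^2 * x by ring]

/-- For every `w ≥ 1` there are continuous piecewise-linear `g, h`, each realizable by a
one-hidden-layer ReLU network of width `O(w)`, such that `h ∘ g` has at least `w²` distinct
breakpoints in `[0,1]`. -/
theorem exists_bridge_with_many_breakpoints :
    ∃ C : ℕ, ∀ w : ℕ, 1 ≤ w → ∃ g h : ℝ → ℝ,
      (∃ W : ℕ, W ≤ C * w ∧ RealizableReLU W g) ∧
      (∃ W : ℕ, W ≤ C * w ∧ RealizableReLU W h) ∧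
      (∃ S : Finset ℝ, w ^ 2 ≤ S.card ∧ (↑S : Set ℝ) ⊆ Set.Icc (0 : ℝ) 1 ∧
        ∀ x ∈ S, IsBreakpoint (h ∘ g) x) := by
  refine ⟨3, fun w hw => ⟨gFun w, gFun w,
    ⟨3*w, le_rfl, gFun_realizable w⟩, ⟨3*w, le_rfl, gFun_realizable w⟩, ?_⟩⟩
  have hw' : (1:ℝ) ≤ w := by exact_mod_cast hw
  have hW : (1:ℝ) ≤ (w:ℝ)^2 := by nlinarith
  have hWpos : (0:ℝ) < (w:ℝ)^2 := by linarith
  refine ⟨(Finset.Icc 1 (w^2)).image (fun i : ℕ => (i:ℝ)/(2*(w:ℝ)^2)), ?_, ?_, ?_⟩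
  · rw [Finset.card_image_of_injective _ (fun i j hij => ?_), Nat.card_Icc]
    · omega
    · have : (i:ℝ) = j := by
        field_simp at hij
        exact_mod_cast hij
      exact_mod_cast this
  · intro x hx
    simp only [coe_image, Set.mem_image, mem_coe, Finset.mem_Icc] at hx
    obtain ⟨i, ⟨hi1, hi2⟩, rfl⟩ := hx
    have hi1' : (1:ℝ) ≤ i := by exact_mod_cast hi1
    have hi2' : (i:ℝ) ≤ (w:ℝ)^2 := by exact_mod_cast hi2
    constructor
    · positivity
    · rw [div_le_one (by positivity)]; nlinarith
  · intro q hq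
    simp only [Finset.mem_image, Finset.mem_Icc] at hq
    obtain ⟨i, ⟨hi1, hi2⟩, rfl⟩ := hq
    have hi1' : (1:ℝ) ≤ i := by exact_mod_cast hi1
    have hi2' : (i:ℝ) ≤ (w:ℝ)^2 := by exact_mod_cast hi2
    set q : ℝ := (i:ℝ)/(2*(w:ℝ)^2) with hqdef
    have hq0 : 1/(2*(w:ℝ)^2) ≤ q := by
      rw [hqdef]
      gcongr
    have hqhalf : q ≤ 1/2 := by
      rw [hqdef, div_le_div_iff₀ (by positivity) (by norm_num)]
      nlinarith
    -- local formula
    have hloc : ∀ y : ℝ, |y - q| ≤ 1/(4*(w:ℝ)^2) →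
        gFun w (gFun w y) = 4*(w:ℝ)^2 * |y - q| := by
      intro y hy
      have hy' := abs_le.mp hy
      have hq4 : 1/(4*(w:ℝ)^2) ≤ q := le_trans (by gcongr <;> norm_num) hq0
      have hy0 : 0 ≤ y := by
        have : q - 1/(4*(w:ℝ)^2) ≤ y := by linarith
        linarith
      have hy1 : y ≤ 1 := by
        have h4 : 1/(4*(w:ℝ)^2) ≤ 1/4 := by
          rw [div_le_div_iff₀ (by positivity) (by norm_num)]
          nlinarith
        linarith
      rw [comp_eq w hw y hy0 hy1]
      have harg : 2*(w:ℝ)^2*y - ((i:ℤ):ℝ) = 2*(w:ℝ)^2*(y - q) := by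
        push_cast
        rw [hqdef]
        field_simp
      have habs : |2*(w:ℝ)^2*y - ((i:ℤ):ℝ)| ≤ 1/2 := by
        rw [harg, abs_mul, abs_of_nonneg (by positivity : (0:ℝ) ≤ 2*(w:ℝ)^2)]
        calc 2*(w:ℝ)^2 * |y - q| ≤ 2*(w:ℝ)^2 * (1/(4*(w:ℝ)^2)) := by gcongr
        _ = 1/2 := by field_simp; ring
      rw [Tw_eq ((i:ℤ)) _ habs, harg, abs_mul,
        abs_of_nonneg (by positivity : (0:ℝ) ≤ 2*(w:ℝ)^2)]
      ring
    -- breakpoint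
    intro ε hε ⟨a, b, hab⟩
    set δ : ℝ := min (ε/2) (1/(4*(w:ℝ)^2)) with hδdef
    have hδpos : 0 < δ := lt_min (by linarith) (by positivity)
    have hδε : δ < ε := lt_of_le_of_lt (min_le_left _ _) (by linarith)
    have hδ4 : δ ≤ 1/(4*(w:ℝ)^2) := min_le_right _ _
    have hmem : ∀ y : ℝ, |y - q| ≤ δ → y ∈ Set.Ioo (q - ε) (q + ε) := by
      intro y hy
      have := abs_le.mp hy
      constructor <;> linarith [this.1, this.2]
    have e0 : gFun w (gFun w q) = a * q + b := hab q (hmem q (by rw [sub_self, abs_zero]; exact hδpos.le))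
    have ep : gFun w (gFun w (q+δ)) = a * (q+δ) + b :=
      hab _ (hmem _ (by rw [show q + δ - q = δ by ring, abs_of_nonneg hδpos.le]))
    have em : gFun w (gFun w (q-δ)) = a * (q-δ) + b :=
      hab _ (hmem _ (by rw [show q - δ - q = -δ by ring, abs_neg, abs_of_nonneg hδpos.le]))
    rw [hloc q (by rw [sub_self, abs_zero]; positivity)] at e0
    rw [hloc (q+δ) (by rw [show q + δ - q = δ by ring, abs_of_nonneg hδpos.le]; exact hδ4)] at ep
    rw [hloc (q-δ) (by rw [show q - δ - q = -δ by ring, abs_neg, abs_of_nonneg hδpos.le]; exact hδ4)] at em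
    rw [show q - q = 0 by ring, abs_zero] at e0
    rw [show q + δ - q = δ by ring, abs_of_nonneg hδpos.le] at ep
    rw [show q - δ - q = -δ by ring, abs_neg, abs_of_nonneg hδpos.le] at em
    nlinarith [ep, em, e0, hδpos, hWpos]
end
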